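/- For two agents with (possibly distinct) normalized monotone valuations v_1, v_2 on a finite set M of goods, there exists a complete EFX allocation of M, i.e., a partition ⟨X_1, X_2⟩ of M such that for all i, j ∈ {1,2} and every g ∈ X_j we have v_i(X_i) ≥ v_i(X_j \ {g}). -/

import Mathlib

/-- For two agents with (possibly distinct) normalized monotone valuations on a finite
set `M` of goods, a complete EFX allocation of `M` always exists. -/
theorem complete_efx_two_agents
    {G : Type} [DecidableEq G] (M : Finset G)
    (v : Fin 2 → Finset G → ℝ)
    (hnorm : ∀ i, v i ∅ = 0)
    (hmono : ∀ i, ∀ S T : Finset G, S ⊆ T → v i S ≤ v i T) :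
    ∃ X : Fin 2 → Finset G,
      (∀ i j, i ≠ j → Disjoint (X i) (X j)) ∧
      Finset.univ.biUnion X = M ∧
      (∀ i j : Fin 2, ∀ g ∈ X j, v i (X j \ {g}) ≤ v i (X i)) := by
  classical
  set u : Finset G → ℝ := v 0 with hu
  -- leximin++ key: (value, size) of the worse bundle, lexicographically
  set key : Finset G → ℝ ×ₗ ℕ := fun A =>
    min (toLex (u A, A.card)) (toLex (u (M \ A), (M \ A).card)) with hkey
  obtain ⟨A, hA, hmax⟩ := M.powerset.exists_max_image key ⟨∅, Finset.empty_mem_powerset M⟩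
  have hAM : A ⊆ M := Finset.mem_powerset.mp hA
  set B : Finset G := M \ A with hB
  have hBM : B ⊆ M := Finset.sdiff_subset
  -- direction 1: for g ∈ B, u (B \ {g}) ≤ u A
  have main1 : ∀ g ∈ B, u (B \ {g}) ≤ u A := by
    intro g hg
    by_contra h
    push_neg at h
    have hgM : g ∈ M := hBM hg
    have hgA : g ∉ A := (Finset.mem_sdiff.mp hg).2
    set A' : Finset G := insert g A with hA'
    have hA'M : A' ⊆ M := Finset.insert_subset hgM hAM
    have hcompl : M \ A' = B \ {g} := by
      ext x
      simp only [hA', hB, Finset.mem_sdiff, Finset.mem_insert, Finset.mem_singleton]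
      tauto
    have hcard : A'.card = A.card + 1 := Finset.card_insert_of_notMem hgA
    have h1 : toLex (u A, A.card) < toLex (u A', A'.card) := by
      rcases lt_or_eq_of_le (hmono 0 A A' (Finset.subset_insert g A)) with h' | h'
      · exact Prod.Lex.lt_iff.mpr (Or.inl h')
      · exact Prod.Lex.lt_iff.mpr (Or.inr ⟨h', by show A.card < A'.card; omega⟩)
    have h2 : toLex (u A, A.card) < toLex (u (M \ A'), (M \ A').card) := by
      rw [hcompl]
      exact Prod.Lex.lt_iff.mpr (Or.inl h)
    have hlt : key A < key A' := lt_of_le_of_lt (min_le_left _ _) (lt_min h1 h2)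
    exact absurd (hmax A' (Finset.mem_powerset.mpr hA'M)) (not_le.mpr hlt)
  -- direction 2: for g ∈ A, u (A \ {g}) ≤ u B
  have main2 : ∀ g ∈ A, u (A \ {g}) ≤ u B := by
    intro g hg
    by_contra h
    push_neg at h
    have hgM : g ∈ M := hAM hg
    set A' : Finset G := A \ {g} with hA'
    have hA'M : A' ⊆ M := (Finset.sdiff_subset).trans hAM
    have hcompl : M \ A' = insert g B := by
      ext x
      simp only [hA', hB, Finset.mem_sdiff, Finset.mem_insert, Finset.mem_singleton]
      constructor
      · rintro ⟨hx, hx'⟩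
        by_cases hxg : x = g
        · exact Or.inl hxg
        · exact Or.inr ⟨hx, fun hxa => hx' ⟨hxa, hxg⟩⟩
      · rintro (rfl | ⟨hx, hx'⟩)
        · exact ⟨hgM, fun h' => h'.2 rfl⟩
        · exact ⟨hx, fun h' => hx' h'.1⟩
    have hgB : g ∉ B := by simp [hB, hgM, hg]
    have hcard : (insert g B).card = B.card + 1 := Finset.card_insert_of_notMem hgB
    have h1 : toLex (u B, B.card) < toLex (u A', A'.card) :=
      Prod.Lex.lt_iff.mpr (Or.inl h)
    have h2 : toLex (u B, B.card) < toLex (u (M \ A'), (M \ A').card) := by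
      rw [hcompl]
      rcases lt_or_eq_of_le (hmono 0 B (insert g B) (Finset.subset_insert g B)) with h' | h'
      · exact Prod.Lex.lt_iff.mpr (Or.inl h')
      · exact Prod.Lex.lt_iff.mpr (Or.inr ⟨h', by show B.card < (insert g B).card; omega⟩)
    have hlt : key A < key A' := lt_of_le_of_lt (min_le_right _ _) (lt_min h1 h2)
    exact absurd (hmax A' (Finset.mem_powerset.mpr hA'M)) (not_le.mpr hlt)
  have hdisj : Disjoint A B := Finset.disjoint_sdiff
  have hunion : A ∪ B = M := Finset.union_sdiff_of_subset hAM
  -- agent 1 chooses its preferred bundle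
  rcases le_total (v 1 A) (v 1 B) with hch | hch
  · refine ⟨![A, B], ?_, ?_, ?_⟩
    · intro i j hij
      fin_cases i <;> fin_cases j <;> simp_all [hdisj, hdisj.symm, Finset.sdiff_disjoint]
    · ext x
      simp [Finset.mem_biUnion, Fin.exists_fin_two, ← Finset.mem_union, hunion]
    · intro i j g hg
      fin_cases i <;> fin_cases j <;>
        simp only [Matrix.cons_val_zero, Matrix.cons_val_one, Matrix.head_cons] at hg ⊢
      · exact le_trans (hmono 0 _ _ Finset.sdiff_subset) (le_refl _)
      · exact main1 g hg
      · exact le_trans (hmono 1 _ _ Finset.sdiff_subset) hch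
      · exact hmono 1 _ _ Finset.sdiff_subset
  · refine ⟨![B, A], ?_, ?_, ?_⟩
    · intro i j hij
      fin_cases i <;> fin_cases j <;> simp_all [hdisj, hdisj.symm, Finset.sdiff_disjoint]
    · ext x
      simp [Finset.mem_biUnion, Fin.exists_fin_two, ← Finset.mem_union, Finset.union_comm, hunion]
    · intro i j g hg
      fin_cases i <;> fin_cases j <;>
        simp only [Matrix.cons_val_zero, Matrix.cons_val_one, Matrix.head_cons] at hg ⊢
      · exact le_trans (hmono 0 _ _ Finset.sdiff_subset) (le_refl _)
      · exact main2 g hg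
      · exact le_trans (hmono 1 _ _ Finset.sdiff_subset) hch
      · exact hmono 1 _ _ Finset.sdiff_subset
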